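/- Let ι be a nonempty finite type, let ρ1 and ρ2 be positive semidefinite complex matrices indexed by ι with trace 1, and let 0 ≤ p ≤ 1/2. Set Δ = (1−p) • ρ2 − p • ρ1 and let M be the orthogonal projection onto the span of the eigenvectors of the Hermitian matrix Δ with positive eigenvalues; assume M ≠ 0. Then the two-outcome POVM {(1/2) • (1 + (1/‖M‖₂) • M), (1/2) • (1 − (1/‖M‖₂) • M)} has discrimination error Re(p · Tr((1/2) • (1 + (1/‖M‖₂) • M) · ρ1) + (1−p) · Tr((1/2) • (1 − (1/‖M‖₂) • M) · ρ2)) = (1/2) · (1 − ((1−2p) + ‖(1−p) • ρ2 − p • ρ1‖₁)/(2‖M‖₂)). -/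

import Mathlib

open Matrix Finset
open scoped BigOperators Kronecker ComplexOrder

noncomputable section

/-- The flip (swap) operator on `ℂ^d ⊗ ℂ^d`. -/
def Flip (d : ℕ) : Matrix (Fin d × Fin d) (Fin d × Fin d) ℂ :=
  Matrix.of fun p q => if p.1 = q.2 ∧ p.2 = q.1 then 1 else 0

/-- Projection onto the symmetric subspace, `Π_s = (1 + F)/2`. -/
def projSym (d : ℕ) : Matrix (Fin d × Fin d) (Fin d × Fin d) ℂ :=
  (2 : ℂ)⁻¹ • (1 + Flip d)

/-- Projection onto the antisymmetric subspace, `Π_a = (1 - F)/2`. -/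
def projAsym (d : ℕ) : Matrix (Fin d × Fin d) (Fin d × Fin d) ℂ :=
  (2 : ℂ)⁻¹ • (1 - Flip d)

/-- The symmetric Werner state `σ_d = (2/(d(d+1))) • Π_s`. -/
def wernerSym (d : ℕ) : Matrix (Fin d × Fin d) (Fin d × Fin d) ℂ :=
  (2 / ((d : ℂ) * ((d : ℂ) + 1))) • projSym d

/-- The antisymmetric Werner state `α_d = (2/(d(d-1))) • Π_a`. -/
def wernerAsym (d : ℕ) : Matrix (Fin d × Fin d) (Fin d × Fin d) ℂ :=
  (2 / ((d : ℂ) * ((d : ℂ) - 1))) • projAsym d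

/-- The POVM element `G_d`: diagonal, with `(i,j),(i,j)` entry `1` iff `i ≠ j`. -/
def Gmat (d : ℕ) : Matrix (Fin d × Fin d) (Fin d × Fin d) ℂ :=
  Matrix.diagonal fun p => if p.1 ≠ p.2 then 1 else 0

/-- `n`-fold tensor power of a matrix on `ℂ^d ⊗ ℂ^d`. -/
def tpow {d : ℕ} (n : ℕ) (X : Matrix (Fin d × Fin d) (Fin d × Fin d) ℂ) :
    Matrix (Fin n → Fin d × Fin d) (Fin n → Fin d × Fin d) ℂ :=
  Matrix.of fun f g => ∏ m, X (f m) (g m)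

/-- The twirled single-copy POVM element `M_d = ((d-1)/(d+1)) • Π_s + Π_a`. -/
def MdMat (d : ℕ) : Matrix (Fin d × Fin d) (Fin d × Fin d) ℂ :=
  (((d : ℂ) - 1) / ((d : ℂ) + 1)) • projSym d + projAsym d

/-- `A_k`: sum over all `k`-element subsets `S` of the copies of the tensor product with
`Π_a` on copies in `S` and `Π_s` elsewhere. -/
def Amat (d n k : ℕ) : Matrix (Fin n → Fin d × Fin d) (Fin n → Fin d × Fin d) ℂ :=
  ∑ S ∈ Finset.powersetCard k (Finset.univ : Finset (Fin n)),
    Matrix.of fun f g => ∏ m, (if m ∈ S then projAsym d else projSym d) (f m) (g m)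

/-- Partial transpose on `ℂ^d ⊗ ℂ^d`. -/
def pt {d : ℕ} (X : Matrix (Fin d × Fin d) (Fin d × Fin d) ℂ) :
    Matrix (Fin d × Fin d) (Fin d × Fin d) ℂ :=
  Matrix.of fun p q => X (p.1, q.2) (q.1, p.2)

/-- The maximally entangled state `Φ_d`. -/
def Phi (d : ℕ) : Matrix (Fin d × Fin d) (Fin d × Fin d) ℂ :=
  Matrix.of fun p q => if p.1 = p.2 ∧ q.1 = q.2 then ((d : ℂ))⁻¹ else 0

/-- `n`-copy partial transpose. -/
def ptN {d n : ℕ} (Y : Matrix (Fin n → Fin d × Fin d) (Fin n → Fin d × Fin d) ℂ) :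
    Matrix (Fin n → Fin d × Fin d) (Fin n → Fin d × Fin d) ℂ :=
  Matrix.of fun f g => Y (fun m => ((f m).1, (g m).2)) (fun m => ((g m).1, (f m).2))

/-- `T_l`: sum over all `l`-element subsets `S` of the copies of the tensor product with
`Φ_d` on copies in `S` and `1 - Φ_d` elsewhere. -/
def Tmat (d n l : ℕ) : Matrix (Fin n → Fin d × Fin d) (Fin n → Fin d × Fin d) ℂ :=
  ∑ S ∈ Finset.powersetCard l (Finset.univ : Finset (Fin n)),
    Matrix.of fun f g => ∏ m, (if m ∈ S then Phi d else (1 - Phi d)) (f m) (g m)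

/-- The matrix `Q` of the linear program: `Q l k = Σ_{j=0}^{min(l,k)}
(n−l choose k−j)(l choose j)(1−d)^j (1+d)^{l−j}`. -/
def Qmat (n : ℕ) (d : ℝ) (l k : ℕ) : ℝ :=
  ∑ j ∈ Finset.range (min l k + 1),
    ((n - l).choose (k - j) : ℝ) * (l.choose j : ℝ) * (1 - d) ^ j * (1 + d) ^ (l - j)

/-- A PPT POVM element on the `n`-copy space: `E`, `1 - E`, `E^Γ`, `(1-E)^Γ` all PSD. -/
def IsPPTPovmElem {d n : ℕ}
    (E : Matrix (Fin n → Fin d × Fin d) (Fin n → Fin d × Fin d) ℂ) : Prop :=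
  E.PosSemidef ∧ (1 - E).PosSemidef ∧ (ptN E).PosSemidef ∧ (ptN (1 - E)).PosSemidef

/-- Error probability for discriminating `σ_d^{⊗n}` (prior `p`) from `α_d^{⊗n}`
(prior `1-p`) with the two-outcome POVM `{E, 1 - E}`. -/
def errProb (d n : ℕ) (p : ℝ)
    (E : Matrix (Fin n → Fin d × Fin d) (Fin n → Fin d × Fin d) ℂ) : ℝ :=
  ((p : ℂ) * (E * tpow n (wernerSym d)).trace
    + (1 - (p : ℂ)) * ((1 - E) * tpow n (wernerAsym d)).trace).re

/-- Separability of a bipartite matrix. -/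
def IsSep {I J : Type*} [Fintype I] [Fintype J]
    (W : Matrix (I × J) (I × J) ℂ) : Prop :=
  ∃ (m : ℕ) (A : Fin m → Matrix I I ℂ) (B : Fin m → Matrix J J ℂ),
    (∀ i, (A i).PosSemidef) ∧ (∀ i, (B i).PosSemidef) ∧ W = ∑ i, A i ⊗ₖ B i

/-- Square root of a positive semidefinite matrix (the definition `Matrix.PosSemidef.sqrt`
of the older Mathlib, removed since). -/
def Matrix.PosSemidef.sqrt {n : Type*} [Fintype n] [DecidableEq n] {A : Matrix n n ℂ}
    (hA : A.PosSemidef) : Matrix n n ℂ :=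
  hA.1.eigenvectorUnitary.1 * diagonal ((↑) ∘ (√·) ∘ hA.1.eigenvalues) *
    (star hA.1.eigenvectorUnitary : Matrix n n ℂ)

/-- Trace norm `‖X‖₁ = Tr √(Xᴴ X)`. -/
def traceNorm {ι : Type*} [Fintype ι] [DecidableEq ι] (X : Matrix ι ι ℂ) : ℝ :=
  ((Matrix.posSemidef_conjTranspose_mul_self X).sqrt).trace.re

/-- Frobenius (Hilbert–Schmidt) norm `‖X‖₂ = √(Tr (Xᴴ X))`. -/
def frobNorm {ι : Type*} [Fintype ι] (X : Matrix ι ι ℂ) : ℝ :=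
  Real.sqrt ((Xᴴ * X).trace.re)

open scoped MatrixOrder in
theorem psd_sqrt_eq_of_mul_self {n : Type*} [Fintype n] [DecidableEq n] {A B : Matrix n n ℂ}
    (hA : A.PosSemidef) (hB : B.PosSemidef) (h : B * B = A) : hA.sqrt = B := by
  have e : hA.sqrt = CFC.sqrt A := by
    rw [CFC.sqrt_eq_cfc, cfc_nnreal_eq_real _ A, hA.1.cfc_eq]
    simp only [IsHermitian.cfc, Real.coe_sqrt, Real.coe_toNNReal', Matrix.PosSemidef.sqrt]
    rw [Unitary.conjStarAlgAut_apply]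
    congr 2
    congr 1
    funext i
    simp [Function.comp_def, max_eq_left (hA.eigenvalues_nonneg i)]
  rw [e]
  exact CFC.sqrt_unique h hB.nonneg

/-- error probability of the normalized Holevo–Helstrom POVM. -/
theorem normalized_helstrom_error {ι : Type} [Fintype ι] [DecidableEq ι] [Nonempty ι]
    (ρ1 ρ2 : Matrix ι ι ℂ) (h1 : ρ1.PosSemidef) (h2 : ρ2.PosSemidef)
    (t1 : ρ1.trace = 1) (t2 : ρ2.trace = 1)
    (p : ℝ) (hp0 : 0 ≤ p) (hp : p ≤ 1 / 2)
    (Δ : Matrix ι ι ℂ) (hΔdef : Δ = ((1 - p : ℝ) : ℂ) • ρ2 - ((p : ℝ) : ℂ) • ρ1)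
    (hΔ : Δ.IsHermitian)
    (M : Matrix ι ι ℂ)
    (hM : M = (hΔ.eigenvectorUnitary : Matrix ι ι ℂ)
        * Matrix.diagonal (fun i => if 0 < hΔ.eigenvalues i then (1 : ℂ) else 0)
        * (hΔ.eigenvectorUnitary : Matrix ι ι ℂ)ᴴ)
    (hM0 : M ≠ 0) :
    ((p : ℂ) * (((2 : ℂ)⁻¹ • (1 + ((frobNorm M : ℝ) : ℂ)⁻¹ • M)) * ρ1).trace
        + ((1 - p : ℝ) : ℂ)
          * (((2 : ℂ)⁻¹ • (1 - ((frobNorm M : ℝ) : ℂ)⁻¹ • M)) * ρ2).trace).re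
      = (1 / 2) * (1 - ((1 - 2 * p)
          + traceNorm (((1 - p : ℝ) : ℂ) • ρ2 - ((p : ℝ) : ℂ) • ρ1))
          / (2 * frobNorm M)) := by
  classical
  set V : Matrix ι ι ℂ := (hΔ.eigenvectorUnitary : Matrix ι ι ℂ) with hVdef
  set lam : ι → ℝ := hΔ.eigenvalues with hlamdef
  have hV1 : Vᴴ * V = 1 := by
    simpa [Matrix.star_eq_conjTranspose] using
      (Matrix.mem_unitaryGroup_iff'.mp hΔ.eigenvectorUnitary.2)
  -- spectral theorem
  have hspec : Δ = V * Matrix.diagonal (fun i => (lam i : ℂ)) * Vᴴ := by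
    have := hΔ.spectral_theorem
    rw [this, Unitary.conjStarAlgAut_apply]; rfl
  -- conjugation lemmas
  have hconj_mul : ∀ A B : Matrix ι ι ℂ,
      (V * A * Vᴴ) * (V * B * Vᴴ) = V * (A * B) * Vᴴ := by
    intro A B
    calc (V * A * Vᴴ) * (V * B * Vᴴ) = V * A * (Vᴴ * V) * B * Vᴴ := by
          simp only [Matrix.mul_assoc]
      _ = V * (A * B) * Vᴴ := by simp only [hV1, Matrix.mul_one, Matrix.mul_assoc]
  have hconj_tr : ∀ A : Matrix ι ι ℂ, (V * A * Vᴴ).trace = A.trace := by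
    intro A
    rw [Matrix.trace_mul_comm (V * A) Vᴴ, ← Matrix.mul_assoc, hV1, Matrix.one_mul]
  -- trace of M * Δ
  set s : ℝ := ∑ i, if 0 < lam i then lam i else 0 with hsdef
  have hMΔ : (M * Δ).trace = (s : ℂ) := by
    rw [hM, hspec, hconj_mul, hconj_tr, Matrix.diagonal_mul_diagonal,
      Matrix.trace_diagonal]
    push_cast [hsdef]
    refine Finset.sum_congr rfl fun i _ => ?_
    by_cases h : 0 < lam i <;> simp [h]
  -- trace norm of Δ
  set T : ℝ := ∑ i, |lam i| with hTdef
  have hsqrt : (Matrix.posSemidef_conjTranspose_mul_self Δ).sqrt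
      = V * Matrix.diagonal (fun i => ((|lam i| : ℝ) : ℂ)) * Vᴴ := by
    refine psd_sqrt_eq_of_mul_self _ (Matrix.PosSemidef.mul_mul_conjTranspose_same ?_ V) ?_
    · exact Matrix.posSemidef_diagonal_iff.mpr fun i =>
        Complex.zero_le_real.mpr (abs_nonneg (lam i))
    · rw [hconj_mul, Matrix.diagonal_mul_diagonal, hΔ.eq, hspec, hconj_mul,
        Matrix.diagonal_mul_diagonal]
      have hd : (fun i => ((|lam i| : ℝ) : ℂ) * ((|lam i| : ℝ) : ℂ))
          = fun i => ((lam i : ℝ) : ℂ) * ((lam i : ℝ) : ℂ) := by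
        funext i
        rw [← Complex.ofReal_mul, ← Complex.ofReal_mul, abs_mul_abs_self]
      rw [hd]
  have hTN : traceNorm Δ = T := by
    rw [traceNorm, hsqrt, hconj_tr, Matrix.trace_diagonal, hTdef]
    rw [← Complex.ofReal_sum]
    exact Complex.ofReal_re _
  -- trace of Δ
  have htrΔ : (∑ i, lam i) = 1 - 2 * p := by
    have h1 : Δ.trace = ((∑ i, lam i : ℝ) : ℂ) := by
      rw [hspec, hconj_tr, Matrix.trace_diagonal]; push_cast; ring
    have h2 : Δ.trace = ((1 - 2 * p : ℝ) : ℂ) := by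
      rw [hΔdef, Matrix.trace_sub, Matrix.trace_smul, Matrix.trace_smul, t1, t2]
      simp only [smul_eq_mul]; push_cast; ring
    exact_mod_cast h1.symm.trans h2
  -- relation 2 s = (1 - 2p) + T
  have hkey : 2 * s = (1 - 2 * p) + T := by
    rw [← htrΔ, hsdef, hTdef, Finset.mul_sum, ← Finset.sum_add_distrib]
    refine Finset.sum_congr rfl fun i _ => ?_
    rcases lt_or_ge 0 (lam i) with h | h
    · rw [if_pos h, abs_of_pos h]; ring
    · rw [if_neg (not_lt.mpr h), abs_of_nonpos h]; ring
  -- frobNorm M ≠ 0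
  set f : ℝ := frobNorm M with hfdef
  have hf : f ≠ 0 := by
    have htr : (Mᴴ * M).trace = ((∑ i, ∑ j, Complex.normSq (M j i) : ℝ) : ℂ) := by
      simp only [Matrix.trace, Matrix.diag, Matrix.mul_apply, Matrix.conjTranspose_apply]
      push_cast
      refine Finset.sum_congr rfl fun i _ => Finset.sum_congr rfl fun j _ => ?_
      rw [show star (M j i) = (starRingEnd ℂ) (M j i) from rfl, mul_comm, Complex.mul_conj]
    have hpos : 0 < (Mᴴ * M).trace.re := by
      rw [htr, Complex.ofReal_re]
      obtain ⟨j, i, hji⟩ : ∃ j i, M j i ≠ 0 := by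
        by_contra h
        push_neg at h
        exact hM0 (by ext a b; simpa using h a b)
      have h0 : 0 < Complex.normSq (M j i) := Complex.normSq_pos.mpr hji
      calc (0 : ℝ) < Complex.normSq (M j i) := h0
        _ ≤ ∑ j', Complex.normSq (M j' i) :=
            Finset.single_le_sum (f := fun j' => Complex.normSq (M j' i))
              (fun _ _ => Complex.normSq_nonneg _) (Finset.mem_univ j)
        _ ≤ ∑ i', ∑ j', Complex.normSq (M j' i') :=
            Finset.single_le_sum (f := fun i' => ∑ j', Complex.normSq (M j' i'))
              (fun i' _ => Finset.sum_nonneg fun _ _ => Complex.normSq_nonneg _)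
              (Finset.mem_univ i)
    exact ne_of_gt (Real.sqrt_pos.mpr hpos)
  -- trace identities for M * ρ1, M * ρ2
  have hrel : ((1 - p : ℝ) : ℂ) * (M * ρ2).trace - (p : ℂ) * (M * ρ1).trace = (s : ℂ) := by
    rw [← hMΔ, hΔdef, Matrix.mul_sub, Matrix.mul_smul, Matrix.mul_smul,
      Matrix.trace_sub, Matrix.trace_smul, Matrix.trace_smul]
    simp [smul_eq_mul]
  -- expand the traces on the LHS
  have e1 : ((2 : ℂ)⁻¹ • (1 + ((f : ℝ) : ℂ)⁻¹ • M) * ρ1).trace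
      = 2⁻¹ * (ρ1.trace + ((f : ℝ) : ℂ)⁻¹ * (M * ρ1).trace) := by
    rw [Matrix.smul_mul, Matrix.add_mul, Matrix.one_mul, Matrix.smul_mul,
      Matrix.trace_smul, Matrix.trace_add, Matrix.trace_smul]
    simp [smul_eq_mul]
  have e2 : ((2 : ℂ)⁻¹ • (1 - ((f : ℝ) : ℂ)⁻¹ • M) * ρ2).trace
      = 2⁻¹ * (ρ2.trace - ((f : ℝ) : ℂ)⁻¹ * (M * ρ2).trace) := by
    rw [Matrix.smul_mul, Matrix.sub_mul, Matrix.one_mul, Matrix.smul_mul,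
      Matrix.trace_smul, Matrix.trace_sub, Matrix.trace_smul]
    simp [smul_eq_mul]
  have hfC : ((f : ℝ) : ℂ) ≠ 0 := Complex.ofReal_ne_zero.mpr hf
  have ecomplex : (p : ℂ) * (((2 : ℂ)⁻¹ • (1 + ((f : ℝ) : ℂ)⁻¹ • M)) * ρ1).trace
        + ((1 - p : ℝ) : ℂ)
          * (((2 : ℂ)⁻¹ • (1 - ((f : ℝ) : ℂ)⁻¹ • M)) * ρ2).trace
      = ((1 / 2 - s / (2 * f) : ℝ) : ℂ) := by
    rw [e1, e2, t1, t2]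
    have hrel' : (1 - (p : ℂ)) * (M * ρ2).trace - (p : ℂ) * (M * ρ1).trace = (s : ℂ) := by
      push_cast at hrel ⊢; exact hrel
    push_cast
    linear_combination (-(2⁻¹ * ((f : ℝ) : ℂ)⁻¹)) * hrel'
  rw [ecomplex, Complex.ofReal_re, ← hΔdef, hTN, ← hkey]
  field_simp

end
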